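/- Suppose that C and D are split chain complexes. Then the map sending the chain homotopy class of a chain homotopy equivalence f : C → D to the pair of chain homotopy classes of its restrictions (f|_{C^ℓ}, f|_{C^u}) is a well-defined bijection chEq(C, D) ≅ chEq(C^ℓ, D^ℓ) × chEq(C^u, D^u). -/

import Mathlib

open CategoryTheory Limits

variable {R : Type} [Ring R]

/-- Admissibility: bounded between 0 and n, finitely generated free in each degree. -/
def IsAdmissible (n : ℕ) (C : ChainComplex (ModuleCat R) ℕ) : Prop :=
  (∀ i, n < i → IsZero (C.X i)) ∧
    (∀ i, Module.Finite R (C.X i)) ∧ (∀ i, Module.Free R (C.X i))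

/-- The lower half `C^ℓ` of a chain complex. -/
noncomputable def lowerHalf (n : ℕ) (C : ChainComplex (ModuleCat R) ℕ) :
    ChainComplex (ModuleCat R) ℕ :=
  ChainComplex.of
    (fun i => if 2 * i < n then C.X i else ModuleCat.of R PUnit)
    (fun i =>
      if h : 2 * (i + 1) < n then
        eqToHom (if_pos h) ≫ C.d (i + 1) i ≫ eqToHom (if_pos (by omega : 2 * i < n)).symm
      else 0)
    (fun i => by
      by_cases h : 2 * (i + 1 + 1) < n
      · simp only [dif_pos h, dif_pos (show 2 * (i + 1) < n by omega)]
        simp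
      · simp only [dif_neg h, zero_comp])

/-- The upper half `C^u` of a chain complex. -/
noncomputable def upperHalf (n : ℕ) (C : ChainComplex (ModuleCat R) ℕ) :
    ChainComplex (ModuleCat R) ℕ :=
  ChainComplex.of
    (fun i => if n < 2 * i then C.X i else ModuleCat.of R PUnit)
    (fun i =>
      if h : n < 2 * i then
        eqToHom (if_pos (by omega : n < 2 * (i + 1))) ≫ C.d (i + 1) i ≫ eqToHom (if_pos h).symm
      else 0)
    (fun i => by
      by_cases h : n < 2 * i
      · simp only [dif_pos h, dif_pos (show n < 2 * (i + 1) by omega)]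
        simp
      · simp only [dif_neg h, comp_zero])

/-- A chain complex splits if `C_{n/2} = 0` (n even) or `d_{⌈n/2⌉} = 0` (n odd). -/
def Splits (n : ℕ) (C : ChainComplex (ModuleCat R) ℕ) : Prop :=
  if Even n then IsZero (C.X (n / 2)) else C.d (n / 2 + 1) (n / 2) = 0

/-- The restriction of a chain map to the lower halves. -/
noncomputable def lowerMap (n : ℕ) {C D : ChainComplex (ModuleCat R) ℕ} (f : C ⟶ D) :
    lowerHalf n C ⟶ lowerHalf n D where
  f i :=
    if h : 2 * i < n then
      eqToHom (if_pos h) ≫ f.f i ≫ eqToHom (if_pos h).symm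
    else 0
  comm' := by
    rintro i j (rfl : j + 1 = i)
    show _ ≫ (lowerHalf n D).d (j + 1) j = (lowerHalf n C).d (j + 1) j ≫ _
    by_cases h : 2 * (j + 1) < n
    · simp only [dif_pos h, dif_pos (show 2 * j < n by omega)]
      simp [lowerHalf, h]
    · simp [dif_neg h, lowerHalf]

/-- The restriction of a chain map to the upper halves. -/
noncomputable def upperMap (n : ℕ) {C D : ChainComplex (ModuleCat R) ℕ} (f : C ⟶ D) :
    upperHalf n C ⟶ upperHalf n D where
  f i :=
    if h : n < 2 * i then
      eqToHom (if_pos h) ≫ f.f i ≫ eqToHom (if_pos h).symm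
    else 0
  comm' := by
    rintro i j (rfl : j + 1 = i)
    show _ ≫ (upperHalf n D).d (j + 1) j = (upperHalf n C).d (j + 1) j ≫ _
    by_cases h : n < 2 * j
    · simp only [dif_pos h, dif_pos (show n < 2 * (j + 1) by omega)]
      simp [upperHalf, h]
    · simp [dif_neg h, upperHalf]

/-- A chain map is a chain homotopy equivalence if it is the underlying map of a homotopy
equivalence, i.e. it admits a chain-homotopy inverse. -/
def IsChainHtpyEquiv {C D : ChainComplex (ModuleCat R) ℕ} (f : C ⟶ D) : Prop :=
  ∃ e : HomotopyEquiv C D, e.hom = f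

/-- The setoid of chain homotopy equivalences `C ⟶ D` up to chain homotopy. -/
def chEqSetoid (C D : ChainComplex (ModuleCat R) ℕ) :
    Setoid {f : C ⟶ D // IsChainHtpyEquiv f} where
  r f g := Nonempty (Homotopy f.1 g.1)
  iseqv :=
    ⟨fun f => ⟨Homotopy.refl f.1⟩, fun ⟨h⟩ => ⟨h.symm⟩, fun ⟨h⟩ ⟨h'⟩ => ⟨h.trans h'⟩⟩

/-- `chEq C D` is the set of chain homotopy classes of chain homotopy equivalences `C ⟶ D`. -/
def chEq (C D : ChainComplex (ModuleCat R) ℕ) : Type :=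
  Quotient (chEqSetoid C D)

section SplitAux

variable {n : ℕ} {C D E : ChainComplex (ModuleCat R) ℕ}

lemma lowX (C : ChainComplex (ModuleCat R) ℕ) {i : ℕ} (h : 2 * i < n) :
    (lowerHalf n C).X i = C.X i := if_pos h

lemma upX (C : ChainComplex (ModuleCat R) ℕ) {i : ℕ} (h : n < 2 * i) :
    (upperHalf n C).X i = C.X i := if_pos h

lemma lowZero (C : ChainComplex (ModuleCat R) ℕ) {i : ℕ} (h : ¬ 2 * i < n) :
    IsZero ((lowerHalf n C).X i) := by
  rw [show (lowerHalf n C).X i = ModuleCat.of R PUnit from if_neg h]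
  exact ModuleCat.isZero_of_subsingleton _

lemma upZero (C : ChainComplex (ModuleCat R) ℕ) {i : ℕ} (h : ¬ n < 2 * i) :
    IsZero ((upperHalf n C).X i) := by
  rw [show (upperHalf n C).X i = ModuleCat.of R PUnit from if_neg h]
  exact ModuleCat.isZero_of_subsingleton _

lemma lowD_pos {i : ℕ} (h : 2 * (i + 1) < n) :
    (lowerHalf n C).d (i + 1) i =
      eqToHom (lowX C h) ≫ C.d (i + 1) i ≫ eqToHom (lowX C (by omega : 2 * i < n)).symm := by
  simp [lowerHalf, ChainComplex.of_d, dif_pos h]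

lemma lowD_pos' {i : ℕ} (h : 2 * (i + 1) < n) :
    C.d (i + 1) i =
      eqToHom (lowX C h).symm ≫ (lowerHalf n C).d (i + 1) i ≫
        eqToHom (lowX C (by omega : 2 * i < n)) := by
  rw [lowD_pos h]; simp

lemma lowD_neg {i : ℕ} (h : ¬ 2 * (i + 1) < n) :
    (lowerHalf n C).d (i + 1) i = 0 := by
  simp [lowerHalf, ChainComplex.of_d, dif_neg h]; rfl

lemma upD_pos {i : ℕ} (h : n < 2 * i) :
    (upperHalf n C).d (i + 1) i =
      eqToHom (upX C (by omega : n < 2 * (i + 1))) ≫ C.d (i + 1) i ≫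
        eqToHom (upX C h).symm := by
  simp [upperHalf, ChainComplex.of_d, dif_pos h]

lemma upD_pos' {i : ℕ} (h : n < 2 * i) :
    C.d (i + 1) i =
      eqToHom (upX C (by omega : n < 2 * (i + 1))).symm ≫ (upperHalf n C).d (i + 1) i ≫
        eqToHom (upX C h) := by
  rw [upD_pos h]; simp

lemma upD_neg {i : ℕ} (h : ¬ n < 2 * i) :
    (upperHalf n C).d (i + 1) i = 0 := by
  simp [upperHalf, ChainComplex.of_d, dif_neg h]; rfl

lemma splits_mid (hC : Splits n C) {i : ℕ} (h : 2 * i = n) : IsZero (C.X i) := by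
  have he : Even n := ⟨i, by omega⟩
  rw [Splits, if_pos he] at hC
  have : n / 2 = i := by omega
  rwa [this] at hC

lemma splits_odd (hC : Splits n C) {i : ℕ} (h : 2 * i + 1 = n) : C.d (i + 1) i = 0 := by
  have he : ¬ Even n := by rintro ⟨k, hk⟩; omega
  rw [Splits, if_neg he] at hC
  have : n / 2 = i := by omega
  rwa [this] at hC

lemma lowerMap_f_pos (f : C ⟶ D) {i : ℕ} (h : 2 * i < n) :
    (lowerMap n f).f i = eqToHom (lowX C h) ≫ f.f i ≫ eqToHom (lowX D h).symm :=
  dif_pos h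

lemma lowerMap_f_neg (f : C ⟶ D) {i : ℕ} (h : ¬ 2 * i < n) :
    (lowerMap n f).f i = 0 :=
  dif_neg h

lemma upperMap_f_pos (f : C ⟶ D) {i : ℕ} (h : n < 2 * i) :
    (upperMap n f).f i = eqToHom (upX C h) ≫ f.f i ≫ eqToHom (upX D h).symm :=
  dif_pos h

lemma upperMap_f_neg (f : C ⟶ D) {i : ℕ} (h : ¬ n < 2 * i) :
    (upperMap n f).f i = 0 :=
  dif_neg h

lemma lowerMap_comp (f : C ⟶ D) (g : D ⟶ E) :
    lowerMap n (f ≫ g) = lowerMap n f ≫ lowerMap n g := by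
  refine HomologicalComplex.hom_ext _ _ fun i => ?_
  by_cases h : 2 * i < n
  · simp [lowerMap_f_pos _ h]
  · exact (lowZero E h).eq_of_tgt _ _

lemma upperMap_comp (f : C ⟶ D) (g : D ⟶ E) :
    upperMap n (f ≫ g) = upperMap n f ≫ upperMap n g := by
  refine HomologicalComplex.hom_ext _ _ fun i => ?_
  by_cases h : n < 2 * i
  · simp [upperMap_f_pos _ h]
  · exact (upZero E h).eq_of_tgt _ _

lemma lowerMap_id : lowerMap n (𝟙 C) = 𝟙 (lowerHalf n C) := by
  refine HomologicalComplex.hom_ext _ _ fun i => ?_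
  by_cases h : 2 * i < n
  · simp [lowerMap_f_pos _ h]
  · exact (lowZero C h).eq_of_tgt _ _

lemma upperMap_id : upperMap n (𝟙 C) = 𝟙 (upperHalf n C) := by
  refine HomologicalComplex.hom_ext _ _ fun i => ?_
  by_cases h : n < 2 * i
  · simp [upperMap_f_pos _ h]
  · exact (upZero C h).eq_of_tgt _ _

/-- Combine maps on the halves into a map on the whole complex. -/
noncomputable def combineMap (hC : Splits n C) (hD : Splits n D)
    (g : lowerHalf n C ⟶ lowerHalf n D) (h : upperHalf n C ⟶ upperHalf n D) : C ⟶ D where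
  f i :=
    if hl : 2 * i < n then eqToHom (lowX C hl).symm ≫ g.f i ≫ eqToHom (lowX D hl)
    else if hu : n < 2 * i then eqToHom (upX C hu).symm ≫ h.f i ≫ eqToHom (upX D hu)
    else 0
  comm' := by
    rintro i j (rfl : j + 1 = i)
    by_cases h1 : 2 * (j + 1) < n
    · have h0 : 2 * j < n := by omega
      rw [dif_pos h1, dif_pos h0, lowD_pos' (C := C) h1, lowD_pos' (C := D) h1]
      have hgc := g.comm (j + 1) j
      simp only [Category.assoc, eqToHom_trans_assoc, eqToHom_refl, Category.id_comp]
      rw [reassoc_of% hgc]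
    · by_cases h1' : n < 2 * (j + 1)
      · by_cases h0 : n < 2 * j
        · rw [dif_neg (by omega : ¬ 2 * (j + 1) < n), dif_pos h1',
            dif_neg (by omega : ¬ 2 * j < n), dif_pos h0,
            upD_pos' (C := C) h0, upD_pos' (C := D) h0]
          have hhc := h.comm (j + 1) j
          simp only [Category.assoc, eqToHom_trans_assoc, eqToHom_refl, Category.id_comp]
          rw [reassoc_of% hhc]
        · by_cases h0l : 2 * j < n
          · rw [splits_odd hC (by omega : 2 * j + 1 = n),
              splits_odd hD (by omega : 2 * j + 1 = n)]
            simp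
          · have hz := splits_mid hD (by omega : 2 * j = n)
            rw [dif_neg h0l, dif_neg h0, comp_zero, hz.eq_of_tgt (D.d (j + 1) j) 0, comp_zero]
      · have hz := splits_mid hC (by omega : 2 * (j + 1) = n)
        rw [dif_neg h1, dif_neg h1', zero_comp, hz.eq_of_src (C.d (j + 1) j) 0, zero_comp]

lemma combine_f_low (hC : Splits n C) (hD : Splits n D)
    (g : lowerHalf n C ⟶ lowerHalf n D) (h : upperHalf n C ⟶ upperHalf n D)
    {i : ℕ} (hl : 2 * i < n) :
    (combineMap hC hD g h).f i = eqToHom (lowX C hl).symm ≫ g.f i ≫ eqToHom (lowX D hl) :=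
  dif_pos hl

lemma combine_f_up (hC : Splits n C) (hD : Splits n D)
    (g : lowerHalf n C ⟶ lowerHalf n D) (h : upperHalf n C ⟶ upperHalf n D)
    {i : ℕ} (hu : n < 2 * i) :
    (combineMap hC hD g h).f i = eqToHom (upX C hu).symm ≫ h.f i ≫ eqToHom (upX D hu) := by
  rw [show (combineMap hC hD g h).f i = _ from dif_neg (by omega : ¬ 2 * i < n), dif_pos hu]

lemma lowerMap_combine (hC : Splits n C) (hD : Splits n D)
    (g : lowerHalf n C ⟶ lowerHalf n D) (h : upperHalf n C ⟶ upperHalf n D) :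
    lowerMap n (combineMap hC hD g h) = g := by
  refine HomologicalComplex.hom_ext _ _ fun i => ?_
  by_cases hl : 2 * i < n
  · rw [lowerMap_f_pos _ hl, combine_f_low hC hD g h hl]
    simp
  · exact (lowZero D hl).eq_of_tgt _ _

lemma upperMap_combine (hC : Splits n C) (hD : Splits n D)
    (g : lowerHalf n C ⟶ lowerHalf n D) (h : upperHalf n C ⟶ upperHalf n D) :
    upperMap n (combineMap hC hD g h) = h := by
  refine HomologicalComplex.hom_ext _ _ fun i => ?_
  by_cases hu : n < 2 * i
  · rw [upperMap_f_pos _ hu, combine_f_up hC hD g h hu]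
    simp
  · exact (upZero D hu).eq_of_tgt _ _

lemma combine_self (hC : Splits n C) (hD : Splits n D) (f : C ⟶ D) :
    combineMap hC hD (lowerMap n f) (upperMap n f) = f := by
  refine HomologicalComplex.hom_ext _ _ fun i => ?_
  by_cases hl : 2 * i < n
  · rw [combine_f_low hC hD _ _ hl, lowerMap_f_pos _ hl]
    simp
  · by_cases hu : n < 2 * i
    · rw [combine_f_up hC hD _ _ hu, upperMap_f_pos _ hu]
      simp
    · exact (splits_mid hC (show 2 * i = n by omega)).eq_of_src _ _

lemma combine_comp (hC : Splits n C) (hD : Splits n D) (hE : Splits n E)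
    (g : lowerHalf n C ⟶ lowerHalf n D) (h : upperHalf n C ⟶ upperHalf n D)
    (g' : lowerHalf n D ⟶ lowerHalf n E) (h' : upperHalf n D ⟶ upperHalf n E) :
    combineMap hC hD g h ≫ combineMap hD hE g' h' = combineMap hC hE (g ≫ g') (h ≫ h') := by
  refine HomologicalComplex.hom_ext _ _ fun i => ?_
  by_cases hl : 2 * i < n
  · rw [HomologicalComplex.comp_f, combine_f_low hC hD g h hl, combine_f_low hD hE g' h' hl,
      combine_f_low hC hE _ _ hl]
    simp
  · by_cases hu : n < 2 * i
    · rw [HomologicalComplex.comp_f, combine_f_up hC hD g h hu, combine_f_up hD hE g' h' hu,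
        combine_f_up hC hE _ _ hu]
      simp
    · exact (splits_mid hC (show 2 * i = n by omega)).eq_of_src _ _

lemma combine_id (hC : Splits n C) :
    combineMap hC hC (𝟙 (lowerHalf n C)) (𝟙 (upperHalf n C)) = 𝟙 C := by
  refine HomologicalComplex.hom_ext _ _ fun i => ?_
  by_cases hl : 2 * i < n
  · rw [combine_f_low hC hC _ _ hl]
    simp
  · by_cases hu : n < 2 * i
    · rw [combine_f_up hC hC _ _ hu]
      simp
    · exact (splits_mid hC (show 2 * i = n by omega)).eq_of_src _ _

/-- Restriction of a homotopy to the lower halves. -/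
noncomputable def homotopyLowerMap (hD : Splits n D) {f g : C ⟶ D} (H : Homotopy f g) :
    Homotopy (lowerMap n f) (lowerMap n g) where
  hom i j :=
    if hij : i + 1 = j ∧ 2 * j < n then
      eqToHom (lowX C (by omega : 2 * i < n)) ≫ H.hom i j ≫ eqToHom (lowX D hij.2).symm
    else 0
  zero i j hr := dif_neg (fun hij => hr hij.1)
  comm i := by
    by_cases h0 : 2 * i < n
    · have hprev : prevD i (fun i j =>
          if hij : i + 1 = j ∧ 2 * j < n then
            eqToHom (lowX C (by omega : 2 * i < n)) ≫ H.hom i j ≫ eqToHom (lowX D hij.2).symm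
          else 0) =
          eqToHom (lowX C h0) ≫ prevD i H.hom ≫ eqToHom (lowX D h0).symm := by
        rw [Homotopy.prevD_chainComplex, Homotopy.prevD_chainComplex]
        by_cases h1 : 2 * (i + 1) < n
        · rw [dif_pos ⟨rfl, h1⟩, lowD_pos (C := D) h1]
          simp
        · rw [dif_neg (fun hh => h1 hh.2), lowD_neg (C := D) h1, zero_comp]
          have hz : H.hom i (i + 1) ≫ D.d (i + 1) i = 0 := by
            by_cases hodd : n = 2 * i + 1
            · rw [splits_odd hD (by omega), comp_zero]
            · rw [(splits_mid hD (by omega : 2 * (i + 1) = n)).eq_of_tgt (H.hom i (i + 1)) 0,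
                zero_comp]
          rw [hz]
          simp
      have hnext : dNext i (fun i j =>
          if hij : i + 1 = j ∧ 2 * j < n then
            eqToHom (lowX C (by omega : 2 * i < n)) ≫ H.hom i j ≫ eqToHom (lowX D hij.2).symm
          else 0) =
          eqToHom (lowX C h0) ≫ dNext i H.hom ≫ eqToHom (lowX D h0).symm := by
        rcases i with _ | k
        · simp
        · rw [Homotopy.dNext_succ_chainComplex, Homotopy.dNext_succ_chainComplex, dif_pos ⟨rfl, h0⟩,
            lowD_pos (C := C) h0]
          simp
      rw [lowerMap_f_pos f h0, lowerMap_f_pos g h0, hprev, hnext, H.comm i]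
      simp [Preadditive.add_comp, Preadditive.comp_add]
    · exact (lowZero D h0).eq_of_tgt _ _

/-- Restriction of a homotopy to the upper halves. -/
noncomputable def homotopyUpperMap (hC : Splits n C) {f g : C ⟶ D} (H : Homotopy f g) :
    Homotopy (upperMap n f) (upperMap n g) where
  hom i j :=
    if hij : i + 1 = j ∧ n < 2 * i then
      eqToHom (upX C hij.2) ≫ H.hom i j ≫ eqToHom (upX D (by omega : n < 2 * j)).symm
    else 0
  zero i j hr := dif_neg (fun hij => hr hij.1)
  comm i := by
    by_cases h0 : n < 2 * i
    · have hprev : prevD i (fun i j =>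
          if hij : i + 1 = j ∧ n < 2 * i then
            eqToHom (upX C hij.2) ≫ H.hom i j ≫ eqToHom (upX D (by omega : n < 2 * j)).symm
          else 0) =
          eqToHom (upX C h0) ≫ prevD i H.hom ≫ eqToHom (upX D h0).symm := by
        rw [Homotopy.prevD_chainComplex, Homotopy.prevD_chainComplex, dif_pos ⟨rfl, h0⟩, upD_pos (C := D) h0]
        simp
      have hnext : dNext i (fun i j =>
          if hij : i + 1 = j ∧ n < 2 * i then
            eqToHom (upX C hij.2) ≫ H.hom i j ≫ eqToHom (upX D (by omega : n < 2 * j)).symm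
          else 0) =
          eqToHom (upX C h0) ≫ dNext i H.hom ≫ eqToHom (upX D h0).symm := by
        rcases i with _ | k
        · omega
        · rw [Homotopy.dNext_succ_chainComplex, Homotopy.dNext_succ_chainComplex]
          by_cases h1 : n < 2 * k
          · rw [dif_pos ⟨rfl, h1⟩, upD_pos (C := C) h1]
            simp
          · rw [dif_neg (fun hh => h1 hh.2), upD_neg (C := C) h1, zero_comp]
            have hz : C.d (k + 1) k ≫ H.hom k (k + 1) = 0 := by
              by_cases hodd : n = 2 * k + 1
              · rw [splits_odd hC (by omega), zero_comp]
              · rw [(splits_mid hC (by omega : 2 * k = n)).eq_of_tgt (C.d (k + 1) k) 0,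
                  zero_comp]
            rw [hz]
            simp
      rw [upperMap_f_pos f h0, upperMap_f_pos g h0, hprev, hnext, H.comm i]
      simp [Preadditive.add_comp, Preadditive.comp_add]
    · exact (upZero D h0).eq_of_tgt _ _

/-- Combining homotopies on the halves into a homotopy on the whole complex. -/
noncomputable def homotopyCombine (hC : Splits n C) (hD : Splits n D)
    {g₁ g₂ : lowerHalf n C ⟶ lowerHalf n D} {h₁ h₂ : upperHalf n C ⟶ upperHalf n D}
    (Hg : Homotopy g₁ g₂) (Hh : Homotopy h₁ h₂) :
    Homotopy (combineMap hC hD g₁ h₁) (combineMap hC hD g₂ h₂) where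
  hom i j :=
    if hij : i + 1 = j then
      (if hl : 2 * j < n then
        eqToHom (lowX C (by omega : 2 * i < n)).symm ≫ Hg.hom i j ≫ eqToHom (lowX D hl)
      else if hu : n < 2 * i then
        eqToHom (upX C hu).symm ≫ Hh.hom i j ≫ eqToHom (upX D (by omega : n < 2 * j))
      else 0)
    else 0
  zero i j hr := dif_neg (fun hij => hr hij)
  comm i := by
    by_cases h0 : 2 * i < n
    · have hprev : prevD i (fun i j =>
          if hij : i + 1 = j then
            (if hl : 2 * j < n then
              eqToHom (lowX C (by omega : 2 * i < n)).symm ≫ Hg.hom i j ≫ eqToHom (lowX D hl)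
            else if hu : n < 2 * i then
              eqToHom (upX C hu).symm ≫ Hh.hom i j ≫ eqToHom (upX D (by omega : n < 2 * j))
            else 0)
          else 0) =
          eqToHom (lowX C h0).symm ≫ prevD i Hg.hom ≫ eqToHom (lowX D h0) := by
        rw [Homotopy.prevD_chainComplex, Homotopy.prevD_chainComplex, dif_pos rfl]
        by_cases h1 : 2 * (i + 1) < n
        · rw [dif_pos h1, lowD_pos (C := D) h1]
          simp
        · rw [dif_neg h1, dif_neg (by omega : ¬ n < 2 * i), zero_comp, lowD_neg (C := D) h1,
            comp_zero]
          simp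
      have hnext : dNext i (fun i j =>
          if hij : i + 1 = j then
            (if hl : 2 * j < n then
              eqToHom (lowX C (by omega : 2 * i < n)).symm ≫ Hg.hom i j ≫ eqToHom (lowX D hl)
            else if hu : n < 2 * i then
              eqToHom (upX C hu).symm ≫ Hh.hom i j ≫ eqToHom (upX D (by omega : n < 2 * j))
            else 0)
          else 0) =
          eqToHom (lowX C h0).symm ≫ dNext i Hg.hom ≫ eqToHom (lowX D h0) := by
        rcases i with _ | k
        · simp
        · rw [Homotopy.dNext_succ_chainComplex, Homotopy.dNext_succ_chainComplex, dif_pos rfl, dif_pos h0,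
            lowD_pos' (C := C) h0]
          simp
      rw [combine_f_low hC hD g₁ h₁ h0, combine_f_low hC hD g₂ h₂ h0, hprev, hnext, Hg.comm i]
      simp [Preadditive.add_comp, Preadditive.comp_add]
    · by_cases hu0 : n < 2 * i
      · have hprev : prevD i (fun i j =>
            if hij : i + 1 = j then
              (if hl : 2 * j < n then
                eqToHom (lowX C (by omega : 2 * i < n)).symm ≫ Hg.hom i j ≫ eqToHom (lowX D hl)
              else if hu : n < 2 * i then
                eqToHom (upX C hu).symm ≫ Hh.hom i j ≫ eqToHom (upX D (by omega : n < 2 * j))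
              else 0)
            else 0) =
            eqToHom (upX C hu0).symm ≫ prevD i Hh.hom ≫ eqToHom (upX D hu0) := by
          rw [Homotopy.prevD_chainComplex, Homotopy.prevD_chainComplex, dif_pos rfl,
            dif_neg (by omega : ¬ 2 * (i + 1) < n), dif_pos hu0, upD_pos (C := D) hu0]
          simp
        have hnext : dNext i (fun i j =>
            if hij : i + 1 = j then
              (if hl : 2 * j < n then
                eqToHom (lowX C (by omega : 2 * i < n)).symm ≫ Hg.hom i j ≫ eqToHom (lowX D hl)
              else if hu : n < 2 * i then
                eqToHom (upX C hu).symm ≫ Hh.hom i j ≫ eqToHom (upX D (by omega : n < 2 * j))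
              else 0)
            else 0) =
            eqToHom (upX C hu0).symm ≫ dNext i Hh.hom ≫ eqToHom (upX D hu0) := by
          rcases i with _ | k
          · omega
          · rw [Homotopy.dNext_succ_chainComplex, Homotopy.dNext_succ_chainComplex, dif_pos rfl,
              dif_neg (by omega : ¬ 2 * (k + 1) < n)]
            by_cases h1 : n < 2 * k
            · rw [dif_pos h1, upD_pos' (C := C) h1]
              simp
            · rw [dif_neg h1, comp_zero, upD_neg (C := C) h1, zero_comp]
              simp
        rw [combine_f_up hC hD g₁ h₁ hu0, combine_f_up hC hD g₂ h₂ hu0, hprev, hnext, Hh.comm i]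
        simp [Preadditive.add_comp, Preadditive.comp_add]
      · exact (splits_mid hC (show 2 * i = n by omega)).eq_of_src _ _

lemma isEquiv_lowerMap (hC : Splits n C) (hD : Splits n D) {f : C ⟶ D}
    (hf : IsChainHtpyEquiv f) : IsChainHtpyEquiv (lowerMap n f) := by
  obtain ⟨e, rfl⟩ := hf
  exact ⟨⟨lowerMap n e.hom, lowerMap n e.inv,
    ((Homotopy.ofEq (lowerMap_comp e.hom e.inv).symm).trans
      (homotopyLowerMap hC e.homotopyHomInvId)).trans (Homotopy.ofEq lowerMap_id),
    ((Homotopy.ofEq (lowerMap_comp e.inv e.hom).symm).trans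
      (homotopyLowerMap hD e.homotopyInvHomId)).trans (Homotopy.ofEq lowerMap_id)⟩, rfl⟩

lemma isEquiv_upperMap (hC : Splits n C) (hD : Splits n D) {f : C ⟶ D}
    (hf : IsChainHtpyEquiv f) : IsChainHtpyEquiv (upperMap n f) := by
  obtain ⟨e, rfl⟩ := hf
  exact ⟨⟨upperMap n e.hom, upperMap n e.inv,
    ((Homotopy.ofEq (upperMap_comp e.hom e.inv).symm).trans
      (homotopyUpperMap hC e.homotopyHomInvId)).trans (Homotopy.ofEq upperMap_id),
    ((Homotopy.ofEq (upperMap_comp e.inv e.hom).symm).trans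
      (homotopyUpperMap hD e.homotopyInvHomId)).trans (Homotopy.ofEq upperMap_id)⟩, rfl⟩

lemma isEquiv_combine (hC : Splits n C) (hD : Splits n D)
    {g : lowerHalf n C ⟶ lowerHalf n D} {h : upperHalf n C ⟶ upperHalf n D}
    (hg : IsChainHtpyEquiv g) (hh : IsChainHtpyEquiv h) :
    IsChainHtpyEquiv (combineMap hC hD g h) := by
  obtain ⟨eg, rfl⟩ := hg
  obtain ⟨eh, rfl⟩ := hh
  exact ⟨⟨combineMap hC hD eg.hom eh.hom, combineMap hD hC eg.inv eh.inv,
    ((Homotopy.ofEq (combine_comp hC hD hC eg.hom eh.hom eg.inv eh.inv)).trans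
      (homotopyCombine hC hC eg.homotopyHomInvId eh.homotopyHomInvId)).trans
      (Homotopy.ofEq (combine_id hC)),
    ((Homotopy.ofEq (combine_comp hD hC hD eg.inv eh.inv eg.hom eh.hom)).trans
      (homotopyCombine hD hD eg.homotopyInvHomId eh.homotopyInvHomId)).trans
      (Homotopy.ofEq (combine_id hD))⟩, rfl⟩

end SplitAux

/-- For split chain complexes `C` and `D`, sending the chain homotopy class of
a chain homotopy equivalence `f : C ⟶ D` to the pair of the chain homotopy classes of its
restrictions to the lower and upper halves is a well-defined bijection
`chEq(C, D) ≅ chEq(C^ℓ, D^ℓ) × chEq(C^u, D^u)`. -/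
theorem split_chEq_equiv (n : ℕ) (hn : 0 < n)
    (C D : ChainComplex (ModuleCat R) ℕ)
    (hCa : IsAdmissible n C) (hDa : IsAdmissible n D)
    (hC : Splits n C) (hD : Splits n D) :
    (∀ f : C ⟶ D, IsChainHtpyEquiv f →
        IsChainHtpyEquiv (lowerMap n f) ∧ IsChainHtpyEquiv (upperMap n f)) ∧
    ∃ e : chEq C D ≃ chEq (lowerHalf n C) (lowerHalf n D) × chEq (upperHalf n C) (upperHalf n D),
      ∀ (f : C ⟶ D) (hf : IsChainHtpyEquiv f)
        (hl : IsChainHtpyEquiv (lowerMap n f)) (hu : IsChainHtpyEquiv (upperMap n f)),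
        e (Quotient.mk (chEqSetoid C D) ⟨f, hf⟩) =
          (Quotient.mk (chEqSetoid _ _) ⟨lowerMap n f, hl⟩,
            Quotient.mk (chEqSetoid _ _) ⟨upperMap n f, hu⟩) := by
  refine ⟨fun f hf => ⟨isEquiv_lowerMap hC hD hf, isEquiv_upperMap hC hD hf⟩, ?_⟩
  let F : chEq C D → chEq (lowerHalf n C) (lowerHalf n D) × chEq (upperHalf n C) (upperHalf n D) :=
    Quotient.lift
      (fun f => (Quotient.mk (chEqSetoid _ _) ⟨lowerMap n f.1, isEquiv_lowerMap hC hD f.2⟩,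
        Quotient.mk (chEqSetoid _ _) ⟨upperMap n f.1, isEquiv_upperMap hC hD f.2⟩))
      (fun a b hab => by
        obtain ⟨H⟩ := hab
        exact Prod.ext (Quotient.sound ⟨homotopyLowerMap hD H⟩)
          (Quotient.sound ⟨homotopyUpperMap hC H⟩))
  let G : chEq (lowerHalf n C) (lowerHalf n D) × chEq (upperHalf n C) (upperHalf n D) →
      chEq C D := fun p =>
    Quotient.liftOn₂ p.1 p.2
      (fun g h => Quotient.mk (chEqSetoid _ _)
        ⟨combineMap hC hD g.1 h.1, isEquiv_combine hC hD g.2 h.2⟩)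
      (fun a b a' b' ha hb => by
        obtain ⟨Hg⟩ := ha
        obtain ⟨Hh⟩ := hb
        exact Quotient.sound ⟨homotopyCombine hC hD Hg Hh⟩)
  refine ⟨⟨F, G, ?_, ?_⟩, ?_⟩
  · intro x
    induction x using Quotient.ind with
    | _ a =>
      exact Quotient.sound ⟨Homotopy.ofEq (combine_self hC hD a.1)⟩
  · intro p
    obtain ⟨x, y⟩ := p
    induction x using Quotient.ind with
    | _ a =>
      induction y using Quotient.ind with
      | _ b =>
        exact Prod.ext (Quotient.sound ⟨Homotopy.ofEq (lowerMap_combine hC hD a.1 b.1)⟩)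
          (Quotient.sound ⟨Homotopy.ofEq (upperMap_combine hC hD a.1 b.1)⟩)
  · intro f hf hl hu
    rfl
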